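/- Assume (H1) and let 0 < l ≤ h. If x : (1,1+l] → ℝ is continuous and satisfies |(log t)^{1-γ} x(t) - x₀| ≤ b for all t ∈ (1,1+l], then for all t ∈ (1,1+l]: |(1/Γ(α)) ∫₁ᵗ (log(t/s))^{α-1} f(s, x(s)) ds/s| ≤ M (log t)^{α+k} Γ(k+1)/Γ(α+k+1). -/

import Mathlib

open Real MeasureTheory intervalIntegral Set Filter


lemma beta01_val (p q : ℝ) (hp : 0 < p) (hq : 0 < q) :
    ∫ s in (0:ℝ)..1, s ^ (p - 1) * (1 - s) ^ (q - 1)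
      = Real.Gamma p * Real.Gamma q / Real.Gamma (p + q) := by
  have hB : Complex.betaIntegral p q
      = ((∫ s in (0:ℝ)..1, s ^ (p - 1) * (1 - s) ^ (q - 1) : ℝ) : ℂ) := by
    rw [Complex.betaIntegral, ← intervalIntegral.integral_ofReal]
    apply intervalIntegral.integral_congr
    intro s hs
    rw [Set.uIcc_of_le (by norm_num : (0:ℝ) ≤ 1)] at hs
    push_cast
    rw [Complex.ofReal_cpow hs.1, Complex.ofReal_cpow (by linarith [hs.2])]
    push_cast
    ring
  have h1 : Complex.Gamma p * Complex.Gamma q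
      = Complex.Gamma (p + q) * Complex.betaIntegral p q := by
    have := Complex.Gamma_mul_Gamma_eq_betaIntegral
      (s := (p : ℂ)) (t := (q : ℂ)) (by simpa using hp) (by simpa using hq)
    simpa using this
  rw [hB] at h1
  have h2 : ((Real.Gamma p * Real.Gamma q : ℝ) : ℂ)
      = ((Real.Gamma (p + q) * ∫ s in (0:ℝ)..1, s ^ (p - 1) * (1 - s) ^ (q - 1) : ℝ) : ℂ) := by
    push_cast
    rw [← Complex.Gamma_ofReal, ← Complex.Gamma_ofReal, ← Complex.Gamma_ofReal]
    push_cast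
    exact h1
  have h3 := Complex.ofReal_inj.mp h2
  have hΓ : Real.Gamma (p + q) ≠ 0 := (Real.Gamma_pos_of_pos (by linarith)).ne'
  field_simp
  linarith [h3]

lemma beta01_int (p q : ℝ) (hp : 0 < p) (hq : 0 < q) :
    IntervalIntegrable (fun s => s ^ (p - 1) * (1 - s) ^ (q - 1)) volume 0 1 := by
  have h1 : IntervalIntegrable (fun s => s ^ (p - 1) * (1 - s) ^ (q - 1)) volume 0 (1/2) := by
    apply (intervalIntegral.intervalIntegrable_rpow' (by linarith : (-1:ℝ) < p - 1)).mul_continuousOn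
    apply ContinuousOn.rpow_const (by fun_prop)
    intro s hs
    rw [Set.uIcc_of_le (by norm_num : (0:ℝ) ≤ 1/2)] at hs
    left
    have := hs.2
    intro hcon
    norm_num at hcon
    linarith
  have h2 : IntervalIntegrable (fun s => s ^ (p - 1) * (1 - s) ^ (q - 1)) volume (1/2) 1 := by
    have hb : IntervalIntegrable (fun s : ℝ => (1 - s) ^ (q - 1)) volume (1/2) 1 := by
      have := (intervalIntegral.intervalIntegrable_rpow'
        (a := 0) (b := 1/2) (by linarith : (-1:ℝ) < q - 1)).comp_sub_left 1
      norm_num at this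
      exact this.symm
    apply hb.continuousOn_mul
    apply ContinuousOn.rpow_const (by fun_prop)
    intro s hs
    rw [Set.uIcc_of_le (by norm_num : (1:ℝ)/2 ≤ 1)] at hs
    left
    have := hs.1
    intro hcon
    rw [hcon] at this
    norm_num at this
  exact h1.trans h2

lemma beta_eqOn (p q T : ℝ) (hT : 0 < T) :
    Set.EqOn (fun s : ℝ => T ^ (p + q - 2) * ((T⁻¹ * s) ^ (p - 1) * (1 - T⁻¹ * s) ^ (q - 1)))
      (fun s => s ^ (p - 1) * (T - s) ^ (q - 1)) (Set.Ioo 0 T) := by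
  intro s hs
  have hs0 : 0 < s := hs.1
  have hsT : s < T := hs.2
  have h1 : (1 : ℝ) - T⁻¹ * s = (T - s) / T := by field_simp
  simp only
  rw [h1, show T⁻¹ * s = s / T by ring, Real.div_rpow hs0.le hT.le,
    Real.div_rpow (by linarith) hT.le,
    show p + q - 2 = (p - 1) + (q - 1) by ring, Real.rpow_add hT]
  field_simp [(Real.rpow_pos_of_pos hT (p-1)).ne', (Real.rpow_pos_of_pos hT (q-1)).ne']

lemma beta_scaled_int (p q T : ℝ) (hp : 0 < p) (hq : 0 < q) (hT : 0 < T) :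
    IntervalIntegrable (fun s => s ^ (p - 1) * (T - s) ^ (q - 1)) volume 0 T := by
  have h := ((beta01_int p q hp hq).comp_mul_left (c := T⁻¹)).const_mul (T ^ (p + q - 2))
  rw [zero_div, one_div, inv_inv] at h
  rw [intervalIntegrable_iff_integrableOn_Ioo_of_le hT.le] at h ⊢
  exact h.congr_fun (beta_eqOn p q T hT) measurableSet_Ioo

lemma beta_scaled_val (p q T : ℝ) (hp : 0 < p) (hq : 0 < q) (hT : 0 < T) :
    ∫ s in (0:ℝ)..T, s ^ (p - 1) * (T - s) ^ (q - 1)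
      = T ^ (p + q - 1) * (Real.Gamma p * Real.Gamma q / Real.Gamma (p + q)) := by
  rw [intervalIntegral.integral_of_le hT.le, MeasureTheory.integral_Ioc_eq_integral_Ioo,
    ← MeasureTheory.setIntegral_congr_fun measurableSet_Ioo (beta_eqOn p q T hT)]
  rw [MeasureTheory.integral_const_mul, ← MeasureTheory.integral_Ioc_eq_integral_Ioo,
    ← intervalIntegral.integral_of_le hT.le]
  have hs := intervalIntegral.smul_integral_comp_mul_left
    (a := (0:ℝ)) (b := T) (fun s : ℝ => s ^ (p - 1) * (1 - s) ^ (q - 1)) T⁻¹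
  rw [mul_zero, inv_mul_cancel₀ hT.ne'] at hs
  rw [show (∫ s in (0:ℝ)..T, (T⁻¹ * s) ^ (p - 1) * (1 - T⁻¹ * s) ^ (q - 1))
      = T • (T⁻¹ • ∫ s in (0:ℝ)..T, (T⁻¹ * s) ^ (p - 1) * (1 - T⁻¹ * s) ^ (q - 1)) by
    rw [smul_smul, mul_inv_cancel₀ hT.ne', one_smul]]
  rw [hs, beta01_val p q hp hq]
  rw [smul_eq_mul, show p + q - 1 = (p + q - 2) + 1 by ring, Real.rpow_add_one hT.ne']
  ring

theorem integral_bound_of_H1 (α β γ x₀ h b M k : ℝ) (f : ℝ → ℝ → ℝ)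
    (hα0 : 0 < α) (hα1 : α < 1) (hβ0 : 0 ≤ β) (hβ1 : β ≤ 1)
    (hγ : γ = α + β * (1 - α))
    (hh : 0 < h) (hb : 0 < b) (hM : 0 ≤ M) (hk : β * (1 - α) - 1 < k)
    (H1cont : ∀ t ∈ Set.Ioc (1:ℝ) (1 + h),
      ContinuousOn (fun x : ℝ => f t (Real.log t ^ (γ - 1) * x)) (Set.Icc (x₀ - b) (x₀ + b)))
    (H1meas : ∀ x ∈ Set.Icc (x₀ - b) (x₀ + b),
      AEMeasurable (fun t : ℝ => f t (Real.log t ^ (γ - 1) * x))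
        (MeasureTheory.volume.restrict (Set.Ioc (1:ℝ) (1 + h))))
    (H1bdd : ∀ t ∈ Set.Ioc (1:ℝ) (1 + h), ∀ x ∈ Set.Icc (x₀ - b) (x₀ + b),
      |f t (Real.log t ^ (γ - 1) * x)| ≤ M * Real.log t ^ k)
    (l : ℝ) (hl0 : 0 < l) (hlh : l ≤ h)
    (x : ℝ → ℝ) (hxc : ContinuousOn x (Set.Ioc 1 (1 + l)))
    (hxb : ∀ t ∈ Set.Ioc (1:ℝ) (1 + l), |Real.log t ^ (1 - γ) * x t - x₀| ≤ b) :
    ∀ t ∈ Set.Ioc (1:ℝ) (1 + l),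
      |(1 / Real.Gamma α) * ∫ s in (1:ℝ)..t, Real.log (t / s) ^ (α - 1) * f s (x s) / s|
        ≤ M * Real.log t ^ (α + k) * (Real.Gamma (k + 1) / Real.Gamma (α + k + 1)) := by
  intro t ht
  obtain ⟨ht1, htl⟩ := ht
  have htpos : (0:ℝ) < t := by linarith
  set T := Real.log t with hTdef
  have hT : 0 < T := Real.log_pos ht1
  have hk1 : 0 < k + 1 := by nlinarith [mul_nonneg hβ0 (by linarith : (0:ℝ) ≤ 1 - α)]
  have hΓα : 0 < Real.Gamma α := Real.Gamma_pos_of_pos hα0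
  -- the comparison function
  set g : ℝ → ℝ := fun s => Real.log (t / s) ^ (α - 1) * Real.log s ^ k / s with hg
  -- change of variables data
  have himg : Real.exp '' (Set.Ioo 0 T) = Set.Ioo 1 t := by
    ext s
    constructor
    · rintro ⟨u, ⟨hu0, huT⟩, rfl⟩
      refine ⟨by simpa using Real.exp_lt_exp.mpr hu0, ?_⟩
      have := Real.exp_lt_exp.mpr huT
      rwa [Real.exp_log htpos] at this
    · rintro ⟨hs1, hst⟩
      exact ⟨Real.log s, ⟨Real.log_pos hs1,
        Real.log_lt_log (by linarith) hst⟩, Real.exp_log (by linarith)⟩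
  have hderiv : ∀ u ∈ Set.Ioo (0:ℝ) T,
      HasDerivWithinAt Real.exp (Real.exp u) (Set.Ioo (0:ℝ) T) u :=
    fun u _ => (Real.hasDerivAt_exp u).hasDerivWithinAt
  have hinj : Set.InjOn Real.exp (Set.Ioo 0 T) := Real.exp_injective.injOn
  have hcongr : Set.EqOn (fun u => |Real.exp u| • g (Real.exp u))
      (fun u => u ^ (k + 1 - 1) * (T - u) ^ (α - 1)) (Set.Ioo 0 T) := by
    intro u hu
    have he : 0 < Real.exp u := Real.exp_pos u
    simp only [abs_of_pos he, smul_eq_mul, hg]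
    rw [Real.log_div htpos.ne' he.ne', Real.log_exp, show k + 1 - 1 = k by ring]
    field_simp
    ring
  have hbii : IntervalIntegrable (fun u => u ^ (k + 1 - 1) * (T - u) ^ (α - 1)) volume 0 T :=
    beta_scaled_int (k + 1) α T hk1 hα0 hT
  have hgii : IntervalIntegrable g volume 1 t := by
    rw [intervalIntegrable_iff_integrableOn_Ioo_of_le ht1.le, ← himg,
      integrableOn_image_iff_integrableOn_abs_deriv_smul measurableSet_Ioo hderiv hinj]
    have := (intervalIntegrable_iff_integrableOn_Ioo_of_le hT.le).mp hbii
    exact this.congr_fun hcongr.symm measurableSet_Ioo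
  have hgval : ∫ s in (1:ℝ)..t, g s
      = T ^ (k + 1 + α - 1) * (Real.Gamma (k + 1) * Real.Gamma α / Real.Gamma (k + 1 + α)) := by
    rw [intervalIntegral.integral_of_le ht1.le, MeasureTheory.integral_Ioc_eq_integral_Ioo,
      ← himg, integral_image_eq_integral_abs_deriv_smul measurableSet_Ioo hderiv hinj,
      MeasureTheory.setIntegral_congr_fun measurableSet_Ioo hcongr,
      ← MeasureTheory.integral_Ioc_eq_integral_Ioo, ← intervalIntegral.integral_of_le hT.le]
    exact beta_scaled_val (k + 1) α T hk1 hα0 hT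
  -- pointwise bound
  have hbd : ∀ s ∈ Set.Ioc (1:ℝ) t,
      ‖Real.log (t / s) ^ (α - 1) * f s (x s) / s‖ ≤ M * g s := by
    intro s hs
    obtain ⟨hs1, hst⟩ := hs
    have hs0 : (0:ℝ) < s := by linarith
    have hlogs : 0 < Real.log s := Real.log_pos hs1
    have hA : 0 ≤ Real.log (t / s) ^ (α - 1) :=
      Real.rpow_nonneg (Real.log_nonneg ((one_le_div hs0).mpr hst)) _
    have hy : Real.log s ^ (1 - γ) * x s ∈ Set.Icc (x₀ - b) (x₀ + b) := by
      have := hxb s ⟨hs1, le_trans hst htl⟩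
      rw [abs_le] at this
      constructor <;> linarith [this.1, this.2]
    have hfb := H1bdd s ⟨hs1, le_trans hst (by linarith)⟩ _ hy
    have key : Real.log s ^ (γ - 1) * (Real.log s ^ (1 - γ) * x s) = x s := by
      rw [← mul_assoc, ← Real.rpow_add hlogs]
      norm_num
    rw [key] at hfb
    rw [Real.norm_eq_abs, abs_div, abs_mul, abs_of_nonneg hA, abs_of_pos hs0, hg]
    rw [show M * (Real.log (t / s) ^ (α - 1) * Real.log s ^ k / s)
        = Real.log (t / s) ^ (α - 1) * (M * Real.log s ^ k) / s by ring]
    gcongr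
  -- conclude
  have hmain : ‖∫ s in (1:ℝ)..t, Real.log (t / s) ^ (α - 1) * f s (x s) / s‖
      ≤ |∫ s in (1:ℝ)..t, M * g s| := by
    apply intervalIntegral.norm_integral_le_abs_of_norm_le
    · rw [Set.uIoc_of_le ht1.le]
      exact MeasureTheory.ae_restrict_of_forall_mem measurableSet_Ioc hbd
    · exact hgii.const_mul M
  rw [intervalIntegral.integral_const_mul, hgval] at hmain
  have hTk : 0 ≤ T ^ (k + 1 + α - 1) := (Real.rpow_pos_of_pos hT _).le
  have hΓk : 0 < Real.Gamma (k + 1) := Real.Gamma_pos_of_pos hk1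
  have hΓka : 0 < Real.Gamma (k + 1 + α) := Real.Gamma_pos_of_pos (by linarith)
  have hval : |M * (T ^ (k + 1 + α - 1) * (Real.Gamma (k + 1) * Real.Gamma α / Real.Gamma (k + 1 + α)))|
      = M * (T ^ (k + 1 + α - 1) * (Real.Gamma (k + 1) * Real.Gamma α / Real.Gamma (k + 1 + α))) := by
    apply abs_of_nonneg
    positivity
  rw [hval] at hmain
  rw [abs_mul, abs_of_pos (by positivity : (0:ℝ) < 1 / Real.Gamma α)]
  calc 1 / Real.Gamma α * |∫ s in (1:ℝ)..t, Real.log (t / s) ^ (α - 1) * f s (x s) / s|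
      ≤ 1 / Real.Gamma α * (M * (T ^ (k + 1 + α - 1) * (Real.Gamma (k + 1) * Real.Gamma α / Real.Gamma (k + 1 + α)))) := by
        apply mul_le_mul_of_nonneg_left _ (by positivity)
        simpa [Real.norm_eq_abs] using hmain
    _ = M * T ^ (α + k) * (Real.Gamma (k + 1) / Real.Gamma (α + k + 1)) := by
        rw [show k + 1 + α - 1 = α + k by ring, show k + 1 + α = α + k + 1 by ring]
        have h1 : Real.Gamma (α + k + 1) ≠ 0 :=
          (Real.Gamma_pos_of_pos (by linarith : (0:ℝ) < α + k + 1)).ne'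
        field_simp
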